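/- Assume the flux A satisfies (A-1)–(A-4) and (B-1)–(B-3), the Godunov approximations satisfy |u_j^n| ≤ ℳ, and the CFL condition λL ≤ 1/2 holds. Suppose x ↦ A(x,u) is constant on [x_{j−1}, x_{j+1}] (i.e. [x_{j−1},x_{j+1}] ∩ Ω = ∅). Then the Godunov scheme at cell j can be written in incremental form u_j^{n+1} = u_j^n + C_{j+1/2}^n Δ₊u_j^n − D_{j−1/2}^n Δ₋u_j^n, where C_{j+1/2}^n := −λ[Ā(u_j^n,u_{j+1}^n,x_j,x_j) − Ā(u_j^n,u_j^n,x_j,x_j)]/(u_{j+1}^n − u_j^n) if u_{j+1}^n ≠ u_j^n (and 0 otherwise), D_{j−1/2}^n := λ[Ā(u_j^n,u_j^n,x_j,x_j) − Ā(u_{j−1}^n,u_j^n,x_j,x_j)]/(u_j^n − u_{j−1}^n) if u_j^n ≠ u_{j−1}^n (and 0 otherwise), and these coefficients satisfy C_{j+1/2}^n, D_{j−1/2}^n ∈ [0, 1/2], hence C_{j+1/2}^n, D_{j−1/2}^n ∈ [0,1] and C_{j+1/2}^n + D_{j+1/2}^n ≤ 1. -/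

import Mathlib

open MeasureTheory Filter

/-- The midpoint `u_M(x) = (u_M^-(x) + u_M^+(x))/2` of the flat region. -/
noncomputable def uMid (uMm uMp : ℝ → ℝ) (x : ℝ) : ℝ := (uMm x + uMp x) / 2

/-- The generalized Godunov numerical flux
`Ā(u,v,x,y) = max{A(x, max(u,u_M(x))), A(y, min(v,u_M(y)))}`. -/
noncomputable def Abar (A : ℝ → ℝ → ℝ) (w : ℝ → ℝ) (u v x y : ℝ) : ℝ :=
  max (A x (max u (w x))) (A y (min v (w y)))

/-- The incremental coefficient `C_{j+1/2}^n` of the Godunov scheme. -/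
noncomputable def Cco (A : ℝ → ℝ → ℝ) (w : ℝ → ℝ) (lam Dx : ℝ) (v : ℤ → ℝ) (j : ℤ) : ℝ :=
  if v (j+1) = v j then 0
  else -lam * (Abar A w (v j) (v (j+1)) ((j : ℝ) * Dx) ((j : ℝ) * Dx)
             - Abar A w (v j) (v j) ((j : ℝ) * Dx) ((j : ℝ) * Dx)) / (v (j+1) - v j)

/-- The incremental coefficient `D_{j-1/2}^n` of the Godunov scheme. -/
noncomputable def Dco (A : ℝ → ℝ → ℝ) (w : ℝ → ℝ) (lam Dx : ℝ) (v : ℤ → ℝ) (j : ℤ) : ℝ :=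
  if v j = v (j-1) then 0
  else lam * (Abar A w (v j) (v j) ((j : ℝ) * Dx) ((j : ℝ) * Dx)
            - Abar A w (v (j-1)) (v j) ((j : ℝ) * Dx) ((j : ℝ) * Dx)) / (v j - v (j-1))

/-- (Lemma on the incremental form.) If `x ↦ A(x,u)` is constant on
`[x_{j-1}, x_{j+1}]` (equivalently `[x_{j-1},x_{j+1}] ∩ Ω = ∅`), then the Godunov scheme at
cell `j` can be written in incremental form with coefficients in `[0, 1/2] ⊆ [0,1]` and
`C_{j+1/2}^n + D_{j+1/2}^n ≤ 1`. -/
theorem godunov_incremental_form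
    -- flux and its discontinuity set
    (A : ℝ → ℝ → ℝ) (Om : Set ℝ)
    -- (A-1)
    (hOm_closed : IsClosed Om) (hOm_null : volume Om = 0)
    (hA1 : ContinuousOn (Function.uncurry A) (Omᶜ ×ˢ (Set.univ : Set ℝ)))
    -- (A-2)
    (q : ℝ → ℝ) (hq_locbdd : ∀ r : ℝ, ∃ C, ∀ s ∈ Set.Icc (-r) r, |q s| ≤ C)
    (hA2 : ∀ M : ℝ, 0 < M → ∀ᵐ x ∂(volume : Measure ℝ),
      ∀ u ∈ Set.Icc (-M) M, ∀ v ∈ Set.Icc (-M) M, |A x u - A x v| ≤ q M * |u - v|)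
    -- (A-3)
    (uMm uMp : ℝ → ℝ)
    (huMm_cont : ContinuousOn uMm Omᶜ) (huMp_cont : ContinuousOn uMp Omᶜ)
    (huM_le : ∀ x, uMm x ≤ uMp x)
    (hA3_dec : ∀ x, AntitoneOn (A x) (Set.Iic (uMm x)))
    (hA3_inc : ∀ x, MonotoneOn (A x) (Set.Ici (uMp x)))
    (hA3_zero : ∀ x, ∀ z ∈ Set.Icc (uMm x) (uMp x), A x z = 0)
    -- (A-4)
    (γ : ℝ → ℝ) (hγ_cont : ContinuousOn γ (Set.Ici 0))
    (hγ_mono : StrictMonoOn γ (Set.Ici 0)) (hγ_zero : γ 0 = 0)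
    (hγ_top : Tendsto γ atTop atTop)
    (hA4p : ∀ x u, uMp x ≤ u → γ (u - uMp x) ≤ A x u)
    (hA4m : ∀ x u, u ≤ uMm x → γ (uMm x - u) ≤ A x u)
    -- (B-1): x ↦ A(x,u) is piecewise constant, with discontinuities contained in Om
    (hB1 : ∀ u : ℝ, ∀ x y : ℝ, Set.uIcc x y ⊆ Omᶜ → A x u = A y u)
    -- (B-2)
    (η : ℝ → ℝ) (hη_cont : Continuous η)
    (a : ℝ → ℝ) (ha_BV : BoundedVariationOn a Set.univ)
    (hB2 : ∀ x y u, |A x u - A y u| ≤ η u * |a x - a y|)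
    -- (B-3)
    (hB3m : BoundedVariationOn uMm Set.univ) (hB3p : BoundedVariationOn uMp Set.univ)
    -- initial data
    (u₀ : ℝ → ℝ) (hu₀_BV : BoundedVariationOn u₀ Set.univ)
    (hu₀_supp : HasCompactSupport (fun x => u₀ x - uMid uMm uMp x))
    -- ᾱ := sup_x A(x, u₀(x))
    (abar : ℝ) (habar : IsLUB (Set.range fun x => A x (u₀ x)) abar)
    -- the stationary states k_ᾱ^±
    (km kp : ℝ → ℝ)
    (hkm : ∀ x, A x (km x) = abar ∧ km x ≤ uMm x)
    (hkp : ∀ x, A x (kp x) = abar ∧ uMp x ≤ kp x)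
    -- ℳ bounds sup_x |k_ᾱ^-(x)| and sup_x |k_ᾱ^+(x)|
    (ℳ : ℝ) (hℳm : ∀ x, |km x| ≤ ℳ) (hℳp : ∀ x, |kp x| ≤ ℳ)
    -- L : Lipschitz constant of u ↦ A(x,u) on [-ℳ,ℳ]
    (L : ℝ) (hL : ∀ x u v : ℝ, |u| ≤ ℳ → |v| ≤ ℳ → |A x u - A x v| ≤ L * |u - v|)
    -- the Godunov scheme on the grid x_j = jΔx, t^n = nΔt, λ = Δt/Δx
    (Dx Dt lam : ℝ) (hDx : 0 < Dx) (hDt : 0 < Dt) (hlam : lam = Dt / Dx)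
    (u : ℕ → ℤ → ℝ)
    (h0 : ∀ j : ℤ, u 0 j = u₀ ((j : ℝ) * Dx))
    (hstep : ∀ (n : ℕ) (j : ℤ), u (n+1) j = u n j
      - lam * (Abar A (uMid uMm uMp) (u n j) (u n (j+1)) ((j : ℝ) * Dx) (((j+1 : ℤ) : ℝ) * Dx)
             - Abar A (uMid uMm uMp) (u n (j-1)) (u n j) (((j-1 : ℤ) : ℝ) * Dx) ((j : ℝ) * Dx)))
    -- the CFL condition and the uniform bound on the approximations
    (hCFL : lam * L ≤ 1/2)
    (hbound : ∀ (n : ℕ) (j : ℤ), |u n j| ≤ ℳ)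
    -- the cell under consideration: x ↦ A(x,w) constant on [x_{j-1}, x_{j+1}],
    -- i.e. [x_{j-1}, x_{j+1}] ∩ Ω = ∅
    (n : ℕ) (j : ℤ)
    (hfree : Set.Icc (((j-1 : ℤ) : ℝ) * Dx) (((j+1 : ℤ) : ℝ) * Dx) ∩ Om = ∅)
    (hconst : ∀ w : ℝ, ∀ x ∈ Set.Icc (((j-1 : ℤ) : ℝ) * Dx) (((j+1 : ℤ) : ℝ) * Dx),
      ∀ y ∈ Set.Icc (((j-1 : ℤ) : ℝ) * Dx) (((j+1 : ℤ) : ℝ) * Dx), A x w = A y w) :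
    u (n+1) j = u n j
      + Cco A (uMid uMm uMp) lam Dx (u n) j * (u n (j+1) - u n j)
      - Dco A (uMid uMm uMp) lam Dx (u n) j * (u n j - u n (j-1)) ∧
    Cco A (uMid uMm uMp) lam Dx (u n) j ∈ Set.Icc (0:ℝ) (1/2) ∧
    Dco A (uMid uMm uMp) lam Dx (u n) j ∈ Set.Icc (0:ℝ) (1/2) ∧
    Cco A (uMid uMm uMp) lam Dx (u n) j ∈ Set.Icc (0:ℝ) 1 ∧
    Dco A (uMid uMm uMp) lam Dx (u n) j ∈ Set.Icc (0:ℝ) 1 ∧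
    Cco A (uMid uMm uMp) lam Dx (u n) j + Dco A (uMid uMm uMp) lam Dx (u n) (j+1) ≤ 1 := by
  -- notation
  have hγnn : ∀ t : ℝ, 0 ≤ t → 0 ≤ γ t := by
    intro t ht
    rcases ht.eq_or_lt with h | h
    · rw [← h, hγ_zero]
    · have := hγ_mono (Set.mem_Ici.2 le_rfl) (Set.mem_Ici.2 ht) h
      rw [hγ_zero] at this; exact this.le
  have hγpos : ∀ t : ℝ, 0 < t → 0 < γ t := by
    intro t ht
    have := hγ_mono (Set.mem_Ici.2 le_rfl) (Set.mem_Ici.2 ht.le) ht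
    rwa [hγ_zero] at this
  set w : ℝ → ℝ := uMid uMm uMp with hwdef
  have hw_lb : ∀ x, uMm x ≤ w x := by
    intro x; simp only [hwdef, uMid]; linarith [huM_le x]
  have hw_ub : ∀ x, w x ≤ uMp x := by
    intro x; simp only [hwdef, uMid]; linarith [huM_le x]
  have huMmM : ∀ x, |uMm x| ≤ ℳ := by
    intro x
    have h1 := abs_le.1 (hℳm x); have h2 := abs_le.1 (hℳp x)
    have := (hkm x).2; have := (hkp x).2; have := huM_le x
    exact abs_le.2 ⟨by linarith, by linarith⟩
  have huMpM : ∀ x, |uMp x| ≤ ℳ := by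
    intro x
    have h1 := abs_le.1 (hℳm x); have h2 := abs_le.1 (hℳp x)
    have := (hkm x).2; have := (hkp x).2; have := huM_le x
    exact abs_le.2 ⟨by linarith, by linarith⟩
  have hwM : ∀ x, |w x| ≤ ℳ := by
    intro x
    have h1 := abs_le.1 (huMmM x); have h2 := abs_le.1 (huMpM x)
    have := hw_lb x; have := hw_ub x
    exact abs_le.2 ⟨by linarith, by linarith⟩
  have hlam0 : 0 ≤ lam := by rw [hlam]; positivity
  -- monotonicity of A x on the two half lines containing the flat region
  have hanti : ∀ x, AntitoneOn (A x) (Set.Iic (uMp x)) := by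
    intro x a ha b hb hab
    by_cases hbm : b ≤ uMm x
    · exact hA3_dec x (Set.mem_Iic.2 (hab.trans hbm)) (Set.mem_Iic.2 hbm) hab
    · push_neg at hbm
      rw [hA3_zero x b ⟨hbm.le, hb⟩]
      by_cases ham : a ≤ uMm x
      · have h1 := hA4m x a ham
        have h2 := hγnn _ (by linarith : (0:ℝ) ≤ uMm x - a)
        linarith
      · push_neg at ham
        rw [hA3_zero x a ⟨ham.le, ha⟩]
  have hmono : ∀ x, MonotoneOn (A x) (Set.Ici (uMm x)) := by
    intro x a ha b hb hab
    by_cases hap : uMp x ≤ a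
    · exact hA3_inc x (Set.mem_Ici.2 hap) (Set.mem_Ici.2 (hap.trans hab)) hab
    · push_neg at hap
      rw [hA3_zero x a ⟨ha, hap.le⟩]
      by_cases hbp : uMp x ≤ b
      · have h1 := hA4p x b hbp
        have h2 := hγnn _ (by linarith : (0:ℝ) ≤ b - uMp x)
        linarith
      · push_neg at hbp
        rw [hA3_zero x b ⟨hb, hbp.le⟩]
  -- monotonicity of the Godunov flux
  have hH_anti2 : ∀ x a b c : ℝ, b ≤ c → Abar A w a c x x ≤ Abar A w a b x x := by
    intro x a b c hbc
    refine max_le_max le_rfl ?_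
    exact hanti x (Set.mem_Iic.2 ((min_le_right b (w x)).trans (hw_ub x)))
      (Set.mem_Iic.2 ((min_le_right c (w x)).trans (hw_ub x))) (min_le_min hbc le_rfl)
  have hH_mono1 : ∀ x a b c : ℝ, a ≤ b → Abar A w a c x x ≤ Abar A w b c x x := by
    intro x a b c hab
    refine max_le_max ?_ le_rfl
    exact hmono x (Set.mem_Ici.2 ((hw_lb x).trans (le_max_right a (w x))))
      (Set.mem_Ici.2 ((hw_lb x).trans (le_max_right b (w x)))) (max_le_max hab le_rfl)
  -- L is nonnegative provided ℳ > 0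
  have hLnn : (0:ℝ) < ℳ → 0 ≤ L := by
    intro hM
    have h := hL 0 ℳ (-ℳ) (by rw [abs_of_pos hM]) (by rw [abs_neg, abs_of_pos hM])
    have he : |ℳ - -ℳ| = 2 * ℳ := by rw [sub_neg_eq_add, abs_of_pos (by linarith)]; ring
    rw [he] at h
    nlinarith [abs_nonneg (A 0 ℳ - A 0 (-ℳ))]
  have habs_min : ∀ (b : ℝ) (x : ℝ), |b| ≤ ℳ → |min b (w x)| ≤ ℳ := by
    intro b x hb
    have h1 := abs_le.1 hb; have h2 := abs_le.1 (hwM x)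
    refine abs_le.2 ⟨le_min h1.1 h2.1, (min_le_left _ _).trans h1.2⟩
  have habs_max : ∀ (b : ℝ) (x : ℝ), |b| ≤ ℳ → |max b (w x)| ≤ ℳ := by
    intro b x hb
    have h1 := abs_le.1 hb; have h2 := abs_le.1 (hwM x)
    refine abs_le.2 ⟨h1.1.trans (le_max_left _ _), max_le h1.2 h2.2⟩
  -- Lipschitz bounds for the Godunov flux
  have hMpos : ∀ b c : ℝ, |b| ≤ ℳ → |c| ≤ ℳ → b ≠ c → (0:ℝ) < ℳ := by
    intro b c hb hc hbc
    by_contra h; push_neg at h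
    have hb0 : b = 0 := abs_eq_zero.1 (le_antisymm (hb.trans h) (abs_nonneg b))
    have hc0 : c = 0 := abs_eq_zero.1 (le_antisymm (hc.trans h) (abs_nonneg c))
    exact hbc (hb0.trans hc0.symm)
  have hlip2 : ∀ (x a b c : ℝ), |b| ≤ ℳ → |c| ≤ ℳ →
      |Abar A w a b x x - Abar A w a c x x| ≤ L * |b - c| := by
    intro x a b c hb hc
    rcases eq_or_ne b c with rfl | hbc
    · simp
    · have hL0 := hLnn (hMpos b c hb hc hbc)
      have h1 : |Abar A w a b x x - Abar A w a c x x|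
          ≤ |A x (min b (w x)) - A x (min c (w x))| := by
        refine le_trans (abs_max_sub_max_le_max _ _ _ _) ?_
        simp
      have h2 := hL x _ _ (habs_min b x hb) (habs_min c x hc)
      have h3 : |min b (w x) - min c (w x)| ≤ |b - c| := by
        refine le_trans (abs_min_sub_min_le_max _ _ _ _) ?_
        simp
      calc |Abar A w a b x x - Abar A w a c x x|
          ≤ L * |min b (w x) - min c (w x)| := h1.trans h2
        _ ≤ L * |b - c| := mul_le_mul_of_nonneg_left h3 hL0
  have hlip1 : ∀ (x a b c : ℝ), |a| ≤ ℳ → |b| ≤ ℳ →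
      |Abar A w a c x x - Abar A w b c x x| ≤ L * |a - b| := by
    intro x a b c ha hb
    rcases eq_or_ne a b with rfl | hab
    · simp
    · have hL0 := hLnn (hMpos a b ha hb hab)
      have h1 : |Abar A w a c x x - Abar A w b c x x|
          ≤ |A x (max a (w x)) - A x (max b (w x))| := by
        refine le_trans (abs_max_sub_max_le_max _ _ _ _) ?_
        simp
      have h2 := hL x _ _ (habs_max a x ha) (habs_max b x hb)
      have h3 : |max a (w x) - max b (w x)| ≤ |a - b| := by
        refine le_trans (abs_max_sub_max_le_max _ _ _ _) ?_
        simp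
      calc |Abar A w a c x x - Abar A w b c x x|
          ≤ L * |max a (w x) - max b (w x)| := h1.trans h2
        _ ≤ L * |a - b| := mul_le_mul_of_nonneg_left h3 hL0
  -- bounds on the incremental coefficients (valid at every cell)
  have hCbound : ∀ k : ℤ, Cco A w lam Dx (u n) k ∈ Set.Icc (0:ℝ) (1/2) := by
    intro k
    by_cases h : u n (k+1) = u n k
    · have h0 : Cco A w lam Dx (u n) k = 0 := by simp [Cco, h]
      rw [h0]; constructor <;> norm_num
    · set x := (k:ℝ) * Dx with hx
      have hΔ : u n (k+1) - u n k ≠ 0 := sub_ne_zero.2 h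
      have hΔabs : 0 < |u n (k+1) - u n k| := abs_pos.2 hΔ
      have hCval : Cco A w lam Dx (u n) k
          = -lam * (Abar A w (u n k) (u n (k+1)) x x - Abar A w (u n k) (u n k) x x)
            / (u n (k+1) - u n k) := by
        simp [Cco, h, hx]
      constructor
      · rw [hCval]
        rcases lt_or_gt_of_ne (fun he => h he.symm) with hlt | hgt
        · -- u n k < u n (k+1)
          have hd : Abar A w (u n k) (u n (k+1)) x x ≤ Abar A w (u n k) (u n k) x x :=
            hH_anti2 x _ _ _ hlt.le
          apply div_nonneg _ (by linarith)
          nlinarith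
        · -- u n (k+1) < u n k
          have hd : Abar A w (u n k) (u n k) x x ≤ Abar A w (u n k) (u n (k+1)) x x :=
            hH_anti2 x _ _ _ hgt.le
          refine div_nonneg_iff.2 (Or.inr ⟨by nlinarith, by linarith⟩)
      · have hdb := hlip2 x (u n k) (u n (k+1)) (u n k) (hbound n (k+1)) (hbound n k)
        calc Cco A w lam Dx (u n) k ≤ |Cco A w lam Dx (u n) k| := le_abs_self _
          _ = lam * |Abar A w (u n k) (u n (k+1)) x x - Abar A w (u n k) (u n k) x x|
              / |u n (k+1) - u n k| := by
            rw [hCval, abs_div, abs_mul, abs_neg, abs_of_nonneg hlam0]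
          _ ≤ lam * (L * |u n (k+1) - u n k|) / |u n (k+1) - u n k| := by
            apply div_le_div_of_nonneg_right ?_ hΔabs.le
            exact mul_le_mul_of_nonneg_left hdb hlam0
          _ = lam * L := by field_simp
          _ ≤ 1/2 := hCFL
  have hDbound : ∀ k : ℤ, Dco A w lam Dx (u n) k ∈ Set.Icc (0:ℝ) (1/2) := by
    intro k
    by_cases h : u n k = u n (k-1)
    · have h0 : Dco A w lam Dx (u n) k = 0 := by simp [Dco, h]
      rw [h0]; constructor <;> norm_num
    · set x := (k:ℝ) * Dx with hx
      have hΔ : u n k - u n (k-1) ≠ 0 := sub_ne_zero.2 h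
      have hΔabs : 0 < |u n k - u n (k-1)| := abs_pos.2 hΔ
      have hDval : Dco A w lam Dx (u n) k
          = lam * (Abar A w (u n k) (u n k) x x - Abar A w (u n (k-1)) (u n k) x x)
            / (u n k - u n (k-1)) := by
        simp [Dco, h, hx]
      constructor
      · rw [hDval]
        rcases lt_or_gt_of_ne (fun he => h he) with hlt | hgt
        · -- u n k < u n (k-1)
          have hd : Abar A w (u n k) (u n k) x x ≤ Abar A w (u n (k-1)) (u n k) x x :=
            hH_mono1 x _ _ _ hlt.le
          refine div_nonneg_iff.2 (Or.inr ⟨by nlinarith, by linarith⟩)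
        · -- u n (k-1) < u n k
          have hd : Abar A w (u n (k-1)) (u n k) x x ≤ Abar A w (u n k) (u n k) x x :=
            hH_mono1 x _ _ _ hgt.le
          apply div_nonneg _ (by linarith)
          nlinarith
      · have hdb := hlip1 x (u n k) (u n (k-1)) (u n k) (hbound n k) (hbound n (k-1))
        calc Dco A w lam Dx (u n) k ≤ |Dco A w lam Dx (u n) k| := le_abs_self _
          _ = lam * |Abar A w (u n k) (u n k) x x - Abar A w (u n (k-1)) (u n k) x x|
              / |u n k - u n (k-1)| := by
            rw [hDval, abs_div, abs_mul, abs_of_nonneg hlam0]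
          _ ≤ lam * (L * |u n k - u n (k-1)|) / |u n k - u n (k-1)| := by
            apply div_le_div_of_nonneg_right ?_ hΔabs.le
            exact mul_le_mul_of_nonneg_left hdb hlam0
          _ = lam * L := by field_simp
          _ ≤ 1/2 := hCFL
  -- the incremental form identity
  have hxm_le_xj : ((j-1 : ℤ) : ℝ) * Dx ≤ (j : ℝ) * Dx := by
    push_cast; nlinarith
  have hxj_le_xp : (j : ℝ) * Dx ≤ ((j+1 : ℤ) : ℝ) * Dx := by
    push_cast; nlinarith
  have hxm_mem : ((j-1 : ℤ) : ℝ) * Dx ∈ Set.Icc (((j-1 : ℤ) : ℝ) * Dx) (((j+1 : ℤ) : ℝ) * Dx) :=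
    ⟨le_rfl, hxm_le_xj.trans hxj_le_xp⟩
  have hxj_mem : (j : ℝ) * Dx ∈ Set.Icc (((j-1 : ℤ) : ℝ) * Dx) (((j+1 : ℤ) : ℝ) * Dx) :=
    ⟨hxm_le_xj, hxj_le_xp⟩
  have hxp_mem : ((j+1 : ℤ) : ℝ) * Dx ∈ Set.Icc (((j-1 : ℤ) : ℝ) * Dx) (((j+1 : ℤ) : ℝ) * Dx) :=
    ⟨hxm_le_xj.trans hxj_le_xp, le_rfl⟩
  have hAp : ∀ z, A (((j+1 : ℤ) : ℝ) * Dx) z = A ((j : ℝ) * Dx) z :=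
    fun z => hconst z _ hxp_mem _ hxj_mem
  have hAm : ∀ z, A (((j-1 : ℤ) : ℝ) * Dx) z = A ((j : ℝ) * Dx) z :=
    fun z => hconst z _ hxm_mem _ hxj_mem
  -- equality of flat regions from equality of fluxes
  have hple : ∀ y₁ y₂ : ℝ, (∀ z, A y₁ z = A y₂ z) → uMp y₁ ≤ uMp y₂ := by
    intro y₁ y₂ hA
    by_contra hlt; push_neg at hlt
    have h0 : A y₂ (uMp y₁) = 0 := by
      rw [← hA]; exact hA3_zero y₁ _ ⟨huM_le y₁, le_rfl⟩
    have h1 : γ (uMp y₁ - uMp y₂) ≤ A y₂ (uMp y₁) := hA4p y₂ _ hlt.le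
    have h2 : 0 < γ (uMp y₁ - uMp y₂) := hγpos _ (by linarith)
    linarith
  have hmge : ∀ y₁ y₂ : ℝ, (∀ z, A y₁ z = A y₂ z) → uMm y₂ ≤ uMm y₁ := by
    intro y₁ y₂ hA
    by_contra hlt; push_neg at hlt
    have h0 : A y₂ (uMm y₁) = 0 := by
      rw [← hA]; exact hA3_zero y₁ _ ⟨le_rfl, huM_le y₁⟩
    have h1 : γ (uMm y₂ - uMm y₁) ≤ A y₂ (uMm y₁) := hA4m y₂ _ hlt.le
    have h2 : 0 < γ (uMm y₂ - uMm y₁) := hγpos _ (by linarith)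
    linarith
  have hweq : ∀ y₁ y₂ : ℝ, (∀ z, A y₁ z = A y₂ z) → w y₁ = w y₂ := by
    intro y₁ y₂ hA
    have hA' : ∀ z, A y₂ z = A y₁ z := fun z => (hA z).symm
    have h1 : uMp y₁ = uMp y₂ := le_antisymm (hple y₁ y₂ hA) (hple y₂ y₁ hA')
    have h2 : uMm y₁ = uMm y₂ := le_antisymm (hmge y₂ y₁ hA') (hmge y₁ y₂ hA)
    simp only [hwdef, uMid, h1, h2]
  have hwp : w (((j+1 : ℤ) : ℝ) * Dx) = w ((j : ℝ) * Dx) := hweq _ _ hAp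
  have hwm : w (((j-1 : ℤ) : ℝ) * Dx) = w ((j : ℝ) * Dx) := hweq _ _ hAm
  have hAbarp : Abar A w (u n j) (u n (j+1)) ((j : ℝ) * Dx) (((j+1 : ℤ) : ℝ) * Dx)
      = Abar A w (u n j) (u n (j+1)) ((j : ℝ) * Dx) ((j : ℝ) * Dx) := by
    simp only [Abar, hwp, hAp]
  have hAbarm : Abar A w (u n (j-1)) (u n j) (((j-1 : ℤ) : ℝ) * Dx) ((j : ℝ) * Dx)
      = Abar A w (u n (j-1)) (u n j) ((j : ℝ) * Dx) ((j : ℝ) * Dx) := by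
    simp only [Abar, hwm, hAm]
  have h1 : Cco A w lam Dx (u n) j * (u n (j+1) - u n j)
      = -lam * (Abar A w (u n j) (u n (j+1)) ((j : ℝ) * Dx) ((j : ℝ) * Dx)
              - Abar A w (u n j) (u n j) ((j : ℝ) * Dx) ((j : ℝ) * Dx)) := by
    by_cases h : u n (j+1) = u n j
    · rw [h]; simp [Cco]
    · simp only [Cco, if_neg h]
      exact div_mul_cancel₀ _ (sub_ne_zero.2 h)
  have h2 : Dco A w lam Dx (u n) j * (u n j - u n (j-1))
      = lam * (Abar A w (u n j) (u n j) ((j : ℝ) * Dx) ((j : ℝ) * Dx)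
             - Abar A w (u n (j-1)) (u n j) ((j : ℝ) * Dx) ((j : ℝ) * Dx)) := by
    by_cases h : u n j = u n (j-1)
    · rw [h]; simp [Dco]
    · simp only [Dco, if_neg h]
      exact div_mul_cancel₀ _ (sub_ne_zero.2 h)
  refine ⟨?_, hCbound j, hDbound j,
    ⟨(hCbound j).1, (hCbound j).2.trans (by norm_num)⟩,
    ⟨(hDbound j).1, (hDbound j).2.trans (by norm_num)⟩,
    by linarith [(hCbound j).2, (hDbound (j+1)).2]⟩
  rw [hstep n j, hAbarp, hAbarm, h1, h2]
  ring
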